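/- For every formula φ of basic multi-agent modal logic there is a formula φ' of basic modal logic such that ⟨↑⟩φ ↔ φ' is valid, where ⟨↑⟩ is the arbitrary arrow update quantifier. -/

import Mathlib

namespace AAUML

/-- Formulas of arbitrary arrow update model logic over atoms `P` and agents `A`.
An arrow update model is encoded as a finite list of arrows
`(agent, source outcome, source condition, target outcome, target condition)`,
with outcomes drawn from `ℕ`; `upd U o φ` is `[U,o]φ` and `all φ` is `[↑]φ`. -/
inductive Form (P A : Type) : Type where
  | atom : P → Form P A
  | neg  : Form P A → Form P A
  | and  : Form P A → Form P A → Form P A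
  | box  : A → Form P A → Form P A
  | upd  : List (A × ℕ × Form P A × ℕ × Form P A) → ℕ → Form P A → Form P A
  | all  : Form P A → Form P A

/-- An arrow: agent, source outcome, source condition, target outcome, target condition. -/
abbrev Arrow (P A : Type) := A × ℕ × Form P A × ℕ × Form P A

/-- Formulas of basic multi-agent modal logic: no update modality, no quantifier. -/
inductive Form.Modal {P A : Type} : Form P A → Prop
  | atom (p : P) : Form.Modal (.atom p)
  | neg {φ : Form P A} : Form.Modal φ → Form.Modal (.neg φ)
  | and {φ ψ : Form P A} : Form.Modal φ → Form.Modal ψ → Form.Modal (.and φ ψ)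
  | box (a : A) {φ : Form P A} : Form.Modal φ → Form.Modal (.box a φ)

/-- Formulas of arrow update model logic (no arbitrary-update quantifier anywhere,
including inside the conditions of arrow update models). -/
inductive Form.NoQuant {P A : Type} : Form P A → Prop
  | atom (p : P) : Form.NoQuant (.atom p)
  | neg {φ : Form P A} : Form.NoQuant φ → Form.NoQuant (.neg φ)
  | and {φ ψ : Form P A} : Form.NoQuant φ → Form.NoQuant ψ → Form.NoQuant (.and φ ψ)
  | box (a : A) {φ : Form P A} : Form.NoQuant φ → Form.NoQuant (.box a φ)
  | upd {U : List (Arrow P A)} (o : ℕ) {φ : Form P A} : Form.NoQuant φ →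
      (∀ ar ∈ U, Form.NoQuant ar.2.2.1) → (∀ ar ∈ U, Form.NoQuant ar.2.2.2.2) →
      Form.NoQuant (.upd U o φ)

/-- Propositional formulas (no modalities at all). -/
inductive Form.Prp {P A : Type} : Form P A → Prop
  | atom (p : P) : Form.Prp (.atom p)
  | neg {φ : Form P A} : Form.Prp φ → Form.Prp (.neg φ)
  | and {φ ψ : Form P A} : Form.Prp φ → Form.Prp ψ → Form.Prp (.and φ ψ)

/-- A relational (Kripke) model. -/
structure KModel (P A : Type) : Type 1 where
  World : Type
  R : A → World → World → Prop
  V : World → P → Prop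

variable {P A : Type}

/-- Satisfaction for basic modal formulas (junk value `False` on updates/quantifiers;
only used on modal formulas). -/
def msat (M : KModel P A) : M.World → Form P A → Prop
  | s, .atom p => M.V s p
  | s, .neg φ => ¬ msat M s φ
  | s, .and φ ψ => msat M s φ ∧ msat M s ψ
  | s, .box a φ => ∀ t, M.R a s t → msat M t φ
  | _, .upd _ _ _ => False
  | _, .all _ => False

/-- Some arrow of `U` for agent `a` from outcome `o` to outcome `o'` has its (modal)
source condition true at `s` and its target condition true at `s'`. -/
def marrowOK (M : KModel P A) (U : List (Arrow P A)) (a : A) (o o' : ℕ)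
    (s s' : M.World) : Prop :=
  ∃ ψ ψ', (a, o, ψ, o', ψ') ∈ U ∧ msat M s ψ ∧ msat M s' ψ'

/-- All source and target conditions of `U` are basic modal formulas. -/
def ModalArrows (U : List (Arrow P A)) : Prop :=
  ∀ ar ∈ U, Form.Modal ar.2.2.1 ∧ Form.Modal ar.2.2.2.2

mutual
  /-- Satisfaction `M,s ⊨ φ`.  The case `upd U o φ` is interpreted in the product
  model `M*U` (inlined); `all φ` quantifies over all arrow update models with basic
  modal source and target conditions. -/
  def Form.sat : (M : KModel P A) → M.World → Form P A → Prop
    | M, s, .atom p => M.V s p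
    | M, s, .neg φ => ¬ Form.sat M s φ
    | M, s, .and φ ψ => Form.sat M s φ ∧ Form.sat M s ψ
    | M, s, .box a φ => ∀ t, M.R a s t → Form.sat M t φ
    | M, s, .upd U o φ =>
        Form.sat ⟨M.World × ℕ,
          fun a x y => M.R a x.1 y.1 ∧ satList M U a x.2 y.2 x.1 y.1,
          fun x p => M.V x.1 p⟩ (s, o) φ
    | M, s, .all φ => ∀ (U : List (Arrow P A)) (o : ℕ), ModalArrows U →
        Form.sat ⟨M.World × ℕ,
          fun a x y => M.R a x.1 y.1 ∧ marrowOK M U a x.2 y.2 x.1 y.1,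
          fun x p => M.V x.1 p⟩ (s, o) φ
  termination_by M s φ => sizeOf φ

  /-- Some arrow of the list, for agent `a`, from `o` to `o'`, has its source condition
  true at `s` and its target condition true at `s'`. -/
  def satList : (M : KModel P A) → List (Arrow P A) → A → ℕ → ℕ → M.World → M.World → Prop
    | _, [], _, _, _, _, _ => False
    | M, (b, o1, ψ, o2, ψ') :: rest, a, o, o', s, s' =>
        (b = a ∧ o1 = o ∧ o2 = o' ∧ Form.sat M s ψ ∧ Form.sat M s' ψ') ∨
        satList M rest a o o' s s'
  termination_by M U a o o' s s' => sizeOf U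
end

/-- The product `M*U` of a relational model and an arrow update model. -/
def prodModel (M : KModel P A) (U : List (Arrow P A)) : KModel P A :=
  ⟨M.World × ℕ,
   fun a x y => M.R a x.1 y.1 ∧ satList M U a x.2 y.2 x.1 y.1,
   fun x p => M.V x.1 p⟩

def Valid (φ : Form P A) : Prop := ∀ (M : KModel P A) (s : M.World), Form.sat M s φ

def Form.or (φ ψ : Form P A) : Form P A := .neg (.and (.neg φ) (.neg ψ))
def Form.imp (φ ψ : Form P A) : Form P A := .neg (.and φ (.neg ψ))
def Form.dia (a : A) (φ : Form P A) : Form P A := .neg (.box a (.neg φ))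
/-- `⟨U,o⟩φ` -/
def Form.diaUpd (U : List (Arrow P A)) (o : ℕ) (φ : Form P A) : Form P A :=
  .neg (.upd U o (.neg φ))
/-- `⟨↑⟩φ` -/
def Form.ex (φ : Form P A) : Form P A := .neg (.all (.neg φ))
/-- A canonical tautology. -/
def Form.top [Inhabited P] : Form P A := .neg (.and (.atom default) (.neg (.atom default)))
/-- Finite conjunction. -/
def Form.conj [Inhabited P] : List (Form P A) → Form P A
  | [] => Form.top
  | φ :: rest => .and φ (Form.conj rest)

/-- `Z` is a bisimulation between `M` and `N`. -/
def IsBisim (M N : KModel P A) (Z : M.World → N.World → Prop) : Prop :=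
  ∀ s s', Z s s' →
    (∀ p, M.V s p ↔ N.V s' p) ∧
    (∀ a t, M.R a s t → ∃ t', N.R a s' t' ∧ Z t t') ∧
    (∀ a t', N.R a s' t' → ∃ t, M.R a s t ∧ Z t t')

/-- Bisimilarity of pointed models. -/
def Bisimilar (M : KModel P A) (s : M.World) (N : KModel P A) (s' : N.World) : Prop :=
  ∃ Z, IsBisim M N Z ∧ Z s s'

/-- An action model: actions with accessibility relations and preconditions. -/
structure AModel (P A : Type) : Type 1 where
  Action : Type
  rel : A → Action → Action → Prop
  pre : Action → Form P A

/-- The restricted modal product `M ⊗ E`. -/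
def actProd (M : KModel P A) (E : AModel P A) : KModel P A :=
  ⟨{x : M.World × E.Action // Form.sat M x.1 (E.pre x.2)},
   fun a x y => M.R a x.1.1 y.1.1 ∧ E.rel a x.1.2 y.1.2,
   fun x p => M.V x.1.1 p⟩

/-- `M,s ⊨ [E,e]φ`: if the precondition of `e` holds at `s` then `φ` holds at `(s,e)`
in `M ⊗ E`. -/
def actSat (M : KModel P A) (E : AModel P A) (s : M.World) (e : E.Action)
    (φ : Form P A) : Prop :=
  ∀ h : Form.sat M s (E.pre e), Form.sat (actProd M E) ⟨(s, e), h⟩ φ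


open Classical
attribute [local instance] Classical.propDecidable

variable {P A : Type}

/-- product with modal arrow semantics (the one `all` quantifies over) -/
def pm (M : KModel P A) (U : List (Arrow P A)) : KModel P A :=
  ⟨M.World × ℕ, fun a x y => M.R a x.1 y.1 ∧ marrowOK M U a x.2 y.2 x.1 y.1,
   fun x p => M.V x.1 p⟩

lemma sat_all (M : KModel P A) (s : M.World) (φ : Form P A) :
    Form.sat M s (.all φ) ↔ ∀ (U : List (Arrow P A)) (o : ℕ), ModalArrows U →
      Form.sat (pm M U) (s, o) φ := by simp [Form.sat, pm]

lemma modal_sat {φ : Form P A} (h : φ.Modal) : ∀ (M : KModel P A) (s : M.World),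
    Form.sat M s φ ↔ msat M s φ := by
  induction h with
  | atom p => intro M s; simp [Form.sat, msat]
  | neg _ ih => intro M s; simp [Form.sat, msat, ih]
  | and _ _ ih1 ih2 => intro M s; simp [Form.sat, msat, ih1, ih2]
  | box a _ ih => intro M s; simp [Form.sat, msat, ih]

def ExSat (M : KModel P A) (s : M.World) (φ : Form P A) : Prop :=
  ∃ (U : List (Arrow P A)) (o : ℕ), ModalArrows U ∧ msat (pm M U) (s, o) φ

lemma sat_ex {φ : Form P A} (h : φ.Modal) (M : KModel P A) (s : M.World) :
    Form.sat M s (Form.ex φ) ↔ ExSat M s φ := by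
  have h1 : Form.sat M s (Form.ex φ) ↔ ¬ Form.sat M s (.all (.neg φ)) := by
    simp [Form.ex, Form.sat]
  rw [h1, sat_all]
  push_neg
  constructor
  · rintro ⟨U, o, hU, hs⟩
    refine ⟨U, o, hU, ?_⟩
    have := modal_sat h (pm M U) (s, o)
    rw [Form.sat.eq_2 (pm M U) (s, o) φ] at hs
    tauto
  · rintro ⟨U, o, hU, hs⟩
    refine ⟨U, o, hU, ?_⟩
    have := modal_sat h (pm M U) (s, o)
    rw [Form.sat.eq_2 (pm M U) (s, o) φ]
    tauto

lemma modal_nonempty {φ : Form P A} (h : φ.Modal) : Nonempty P := by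
  induction h with
  | atom p => exact ⟨p⟩
  | neg _ ih => exact ih
  | and _ _ ih _ => exact ih
  | box _ _ ih => exact ih

def mdepth : Form P A → ℕ
  | .atom _ => 0
  | .neg φ => mdepth φ
  | .and φ ψ => max (mdepth φ) (mdepth ψ)
  | .box _ φ => mdepth φ + 1
  | .upd _ _ _ => 0
  | .all _ => 0

section Inh
variable [Inhabited P]

lemma msat_top (M : KModel P A) (s : M.World) : msat M s (Form.top : Form P A) := by
  simp [Form.top, msat]

lemma modal_top : (Form.top : Form P A).Modal :=
  .neg (.and (.atom _) (.neg (.atom _)))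

lemma prp_top : (Form.top : Form P A).Prp := .neg (.and (.atom _) (.neg (.atom _)))

lemma mdepth_top : mdepth (Form.top : Form P A) = 0 := by simp [Form.top, mdepth]

lemma msat_conj (M : KModel P A) (s : M.World) (L : List (Form P A)) :
    msat M s (Form.conj L) ↔ ∀ ψ ∈ L, msat M s ψ := by
  induction L with
  | nil => simpa [Form.conj] using msat_top M s
  | cons ψ L ih => simp [Form.conj, msat, ih]

lemma modal_conj {L : List (Form P A)} (h : ∀ ψ ∈ L, Form.Modal ψ) :
    (Form.conj L).Modal := by
  induction L with
  | nil => exact modal_top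
  | cons ψ L ih => exact .and (h ψ (by simp)) (ih fun χ hχ => h χ (by simp [hχ]))

lemma mdepth_conj {L : List (Form P A)} {n : ℕ} (h : ∀ ψ ∈ L, mdepth ψ ≤ n) :
    mdepth (Form.conj L) ≤ n := by
  induction L with
  | nil => simp [Form.conj, mdepth_top]
  | cons ψ L ih =>
    simp only [Form.conj, mdepth, max_le_iff]
    exact ⟨h ψ (by simp), ih fun χ hχ => h χ (by simp [hχ])⟩

def botF : Form P A := .and (.atom default) (.neg (.atom default))

def disjF : List (Form P A) → Form P A
  | [] => botF
  | φ :: L => Form.or φ (disjF L)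

lemma msat_disj (M : KModel P A) (s : M.World) (L : List (Form P A)) :
    msat M s (disjF L) ↔ ∃ ψ ∈ L, msat M s ψ := by
  induction L with
  | nil => simp [disjF, botF, msat]
  | cons ψ L ih => simp [disjF, Form.or, msat, ih]; tauto

lemma modal_disj {L : List (Form P A)} (h : ∀ ψ ∈ L, Form.Modal ψ) :
    (disjF L).Modal := by
  induction L with
  | nil => exact .and (.atom _) (.neg (.atom _))
  | cons ψ L ih =>
    exact .neg (.and (.neg (h ψ (by simp))) (.neg (ih fun χ hχ => h χ (by simp [hχ]))))

lemma msat_imp (M : KModel P A) (s : M.World) (φ ψ : Form P A) :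
    msat M s (Form.imp φ ψ) ↔ (msat M s φ → msat M s ψ) := by
  simp [Form.imp, msat]

lemma modal_imp {φ ψ : Form P A} (h1 : φ.Modal) (h2 : ψ.Modal) : (Form.imp φ ψ).Modal :=
  .neg (.and h1 (.neg h2))

lemma msat_dia (M : KModel P A) (s : M.World) (a : A) (φ : Form P A) :
    msat M s (Form.dia a φ) ↔ ∃ t, M.R a s t ∧ msat M t φ := by
  simp [Form.dia, msat]

lemma modal_dia {φ : Form P A} (a : A) (h : φ.Modal) : (Form.dia a φ).Modal :=
  .neg (.box a (.neg h))

end Inh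

lemma prp_modal {φ : Form P A} (h : φ.Prp) : φ.Modal := by
  induction h with
  | atom p => exact .atom p
  | neg _ ih => exact .neg ih
  | and _ _ ih1 ih2 => exact .and ih1 ih2

lemma prp_mdepth {φ : Form P A} (h : φ.Prp) : mdepth φ = 0 := by
  induction h with
  | atom p => rfl
  | neg _ ih => simpa [mdepth]
  | and _ _ ih1 ih2 => simp [mdepth, ih1, ih2]

lemma prp_pm {π : Form P A} (h : π.Prp) (M : KModel P A) (U : List (Arrow P A)) :
    ∀ (x : M.World) (o : ℕ), msat (pm M U) (x, o) π ↔ msat M x π := by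
  induction h with
  | atom p => intro x o; simp [msat, pm]
  | neg _ ih => intro x o; simp [msat, ih]
  | and _ _ ih1 ih2 => intro x o; simp [msat, ih1, ih2]

section Red
variable [Inhabited P]

/-- translation eliminating the product: `red U φ o` holds at `t` in `M`
iff `φ` holds at `(t,o)` in `pm M U`. -/
noncomputable def red (U : List (Arrow P A)) : Form P A → ℕ → Form P A
  | .atom p, _ => .atom p
  | .neg φ, o => .neg (red U φ o)
  | .and φ ψ, o => .and (red U φ o) (red U ψ o)
  | .box a φ, o => Form.conj ((U.filter (fun ar => ar.1 = a ∧ ar.2.1 = o)).map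
      (fun ar => Form.imp ar.2.2.1 (.box a (Form.imp ar.2.2.2.2 (red U φ ar.2.2.2.1)))))
  | .upd _ _ _, _ => .atom default
  | .all _, _ => .atom default

lemma red_modal {U : List (Arrow P A)} (hU : ModalArrows U) {φ : Form P A}
    (h : φ.Modal) : ∀ o, (red U φ o).Modal := by
  induction h with
  | atom p => intro o; exact .atom p
  | neg _ ih => intro o; exact .neg (ih o)
  | and _ _ ih1 ih2 => intro o; exact .and (ih1 o) (ih2 o)
  | box a _ ih =>
    intro o
    refine modal_conj ?_
    intro ψ hψ
    simp only [List.mem_map, List.mem_filter] at hψ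
    obtain ⟨ar, ⟨hmem, -⟩, rfl⟩ := hψ
    exact modal_imp (hU ar hmem).1 (.box a (modal_imp (hU ar hmem).2 (ih _)))

lemma red_ok {U : List (Arrow P A)} (hU : ModalArrows U) {φ : Form P A}
    (h : φ.Modal) (M : KModel P A) :
    ∀ (o : ℕ) (t : M.World), msat M t (red U φ o) ↔ msat (pm M U) (t, o) φ := by
  induction h with
  | atom p => intro o t; simp [red, msat, pm]
  | neg _ ih => intro o t; simp [red, msat, ih]
  | and _ _ ih1 ih2 => intro o t; simp [red, msat, ih1, ih2]
  | box a _ ih =>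
    intro o t
    simp only [red, msat_conj, List.mem_map, List.mem_filter, decide_eq_true_eq]
    constructor
    · intro H
      rintro ⟨u, o2⟩ ⟨hR, ψ, ψ', hmem, hψ, hψ'⟩
      have h1 := H _ ⟨(a, o, ψ, o2, ψ'), ⟨hmem, rfl, rfl⟩, rfl⟩
      rw [msat_imp] at h1
      have h3 := h1 hψ u hR
      rw [msat_imp] at h3
      exact (ih o2 u).mp (h3 hψ')
    · rintro H χ ⟨ar, ⟨hmem, ha, ho⟩, rfl⟩
      obtain ⟨a1, o1, σ, o2, τ⟩ := ar
      simp only at ha ho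
      subst ha; subst ho
      rw [msat_imp]
      intro hsrc
      intro u hR
      rw [msat_imp]
      intro htgt
      rw [ih]
      exact H (u, o2) ⟨hR, σ, τ, hmem, hsrc, htgt⟩

end Red

/-- agreement of products on an outcome-closed set -/
lemma agree {U₁ U₂ : List (Arrow P A)} (M : KModel P A) (O : Set ℕ)
    (harr : ∀ a o o' s s', o ∈ O →
      (marrowOK M U₁ a o o' s s' ↔ marrowOK M U₂ a o o' s s'))
    (hcl : ∀ a o o' s s', o ∈ O → marrowOK M U₁ a o o' s s' → o' ∈ O)
    {φ : Form P A} (h : φ.Modal) :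
    ∀ o ∈ O, ∀ t, (msat (pm M U₁) (t, o) φ ↔ msat (pm M U₂) (t, o) φ) := by
  induction h with
  | atom p => intro o ho t; simp [msat, pm]
  | neg _ ih => intro o ho t; simp [msat, ih o ho t]
  | and _ _ ih1 ih2 => intro o ho t; simp [msat, ih1 o ho t, ih2 o ho t]
  | box a _ ih =>
    intro o ho t
    simp only [msat]
    constructor
    · rintro H ⟨u, o2⟩ ⟨hR, hm⟩
      have hm1 := (harr a o o2 t u ho).mpr hm
      exact (ih o2 (hcl a o o2 t u ho hm1) u).mp (H (u, o2) ⟨hR, hm1⟩)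
    · rintro H ⟨u, o2⟩ ⟨hR, hm⟩
      exact (ih o2 (hcl a o o2 t u ho hm) u).mpr
        (H (u, o2) ⟨hR, (harr a o o2 t u ho).mp hm⟩)

def shiftAr (f : ℕ → ℕ) (ar : Arrow P A) : Arrow P A :=
  (ar.1, f ar.2.1, ar.2.2.1, f ar.2.2.2.1, ar.2.2.2.2)

lemma marrowOK_shift (f : ℕ → ℕ) (M : KModel P A) (U : List (Arrow P A))
    (a : A) (x y : ℕ) (s s' : M.World) :
    marrowOK M (U.map (shiftAr f)) a x y s s' ↔
      ∃ o o', x = f o ∧ y = f o' ∧ marrowOK M U a o o' s s' := by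
  constructor
  · rintro ⟨ψ, ψ', hmem, hψ, hψ'⟩
    simp only [List.mem_map] at hmem
    obtain ⟨ar, hmem, heq⟩ := hmem
    obtain ⟨a1, o1, s1, o2, t1⟩ := ar
    simp only [shiftAr, Prod.mk.injEq] at heq
    obtain ⟨rfl, rfl, rfl, rfl, rfl⟩ := heq
    exact ⟨o1, o2, rfl, rfl, s1, t1, hmem, hψ, hψ'⟩
  · rintro ⟨o, o', rfl, rfl, ψ, ψ', hmem, hψ, hψ'⟩
    exact ⟨ψ, ψ', List.mem_map.mpr ⟨(a, o, ψ, o', ψ'), hmem, rfl⟩, hψ, hψ'⟩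

lemma shift_sat {f : ℕ → ℕ} (hf : Function.Injective f) (M : KModel P A)
    (U : List (Arrow P A)) {φ : Form P A} (h : φ.Modal) :
    ∀ (o : ℕ) (t : M.World),
      msat (pm M (U.map (shiftAr f))) (t, f o) φ ↔ msat (pm M U) (t, o) φ := by
  induction h with
  | atom p => intro o t; simp [msat, pm]
  | neg _ ih => intro o t; simp [msat, ih o t]
  | and _ _ ih1 ih2 => intro o t; simp [msat, ih1 o t, ih2 o t]
  | box a _ ih =>
    intro o t
    simp only [msat]
    constructor
    · rintro H ⟨u, o2⟩ ⟨hR, hm⟩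
      refine (ih o2 u).mp (H (u, f o2) ⟨hR, ?_⟩)
      rw [marrowOK_shift]
      exact ⟨o, o2, rfl, rfl, hm⟩
    · rintro H ⟨u, y⟩ ⟨hR, hm⟩
      rw [marrowOK_shift] at hm
      obtain ⟨o1, o2, ho1, rfl, hm⟩ := hm
      obtain rfl := hf ho1
      exact (ih o2 u).mpr (H (u, o2) ⟨hR, hm⟩)

lemma modalArrows_shift {U : List (Arrow P A)} (hU : ModalArrows U) (f : ℕ → ℕ) :
    ModalArrows (U.map (shiftAr f)) := by
  intro ar har
  simp only [List.mem_map] at har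
  obtain ⟨ar0, hmem, rfl⟩ := har
  exact hU ar0 hmem

structure Cube (P A : Type) where
  prp : Form P A
  dia : List (A × Form P A)
  box : List (A × Form P A)

def CubeSat (M : KModel P A) (s : M.World) (c : Cube P A) : Prop :=
  msat M s c.prp ∧
  (∀ q ∈ c.dia, ∃ t, M.R q.1 s t ∧ msat M t q.2) ∧
  (∀ q ∈ c.box, ∀ t, M.R q.1 s t → msat M t q.2)

def Cube.Good (c : Cube P A) (n : ℕ) : Prop :=
  c.prp.Prp ∧ ∀ q ∈ c.dia ++ c.box, q.2.Modal ∧ mdepth q.2 < n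

lemma Cube.Good.mono {c : Cube P A} {n m : ℕ} (h : c.Good n) (hnm : n ≤ m) :
    c.Good m := ⟨h.1, fun q hq => ⟨(h.2 q hq).1, lt_of_lt_of_le (h.2 q hq).2 hnm⟩⟩

def Cube.inter (c d : Cube P A) : Cube P A :=
  ⟨.and c.prp d.prp, c.dia ++ d.dia, c.box ++ d.box⟩

lemma cubeSat_inter (M : KModel P A) (s : M.World) (c d : Cube P A) :
    CubeSat M s (c.inter d) ↔ CubeSat M s c ∧ CubeSat M s d := by
  simp only [CubeSat, Cube.inter, msat, List.mem_append]
  constructor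
  · rintro ⟨⟨h1, h2⟩, h3, h4⟩
    exact ⟨⟨h1, fun q hq => h3 q (Or.inl hq), fun q hq => h4 q (Or.inl hq)⟩,
           ⟨h2, fun q hq => h3 q (Or.inr hq), fun q hq => h4 q (Or.inr hq)⟩⟩
  · rintro ⟨⟨h1, h2, h3⟩, ⟨h4, h5, h6⟩⟩
    exact ⟨⟨h1, h4⟩, fun q hq => hq.elim (h2 q) (h5 q), fun q hq => hq.elim (h3 q) (h6 q)⟩

lemma dnf [Inhabited P] {φ : Form P A} (h : φ.Modal) :
    ∃ L L' : List (Cube P A),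
      (∀ c ∈ L, c.Good (mdepth φ)) ∧ (∀ c ∈ L', c.Good (mdepth φ)) ∧
      (∀ (M : KModel P A) (s : M.World), msat M s φ ↔ ∃ c ∈ L, CubeSat M s c) ∧
      (∀ (M : KModel P A) (s : M.World), ¬ msat M s φ ↔ ∃ c ∈ L', CubeSat M s c) := by
  induction h with
  | atom p =>
    refine ⟨[⟨.atom p, [], []⟩], [⟨.neg (.atom p), [], []⟩], ?_, ?_, ?_, ?_⟩
    · rintro c hc; simp at hc; subst hc; exact ⟨.atom p, by simp⟩
    · rintro c hc; simp at hc; subst hc; exact ⟨.neg (.atom p), by simp⟩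
    · intro M s; simp [CubeSat, msat]
    · intro M s; simp [CubeSat, msat]
  | neg hm ih =>
    obtain ⟨L, L', hg, hg', hpos, hneg⟩ := ih
    refine ⟨L', L, ?_, ?_, ?_, ?_⟩
    · simpa [mdepth] using hg'
    · simpa [mdepth] using hg
    · intro M s; rw [show msat M s (.neg _) ↔ ¬ msat M s _ from Iff.rfl]; exact hneg M s
    · intro M s
      rw [show (¬ msat M s (.neg _)) ↔ ¬¬ msat M s _ from Iff.rfl, not_not]
      exact hpos M s
  | @and φ1 ψ1 hm1 hm2 ih1 ih2 =>
    obtain ⟨L1, L1', hg1, hg1', hpos1, hneg1⟩ := ih1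
    obtain ⟨L2, L2', hg2, hg2', hpos2, hneg2⟩ := ih2
    refine ⟨L1.flatMap (fun c => L2.map (fun d => c.inter d)), L1' ++ L2', ?_, ?_, ?_, ?_⟩
    · intro c hc
      simp only [List.mem_flatMap, List.mem_map] at hc
      obtain ⟨c1, hc1, c2, hc2, rfl⟩ := hc
      have hmax : mdepth (Form.and φ1 ψ1) = max (mdepth φ1) (mdepth ψ1) := rfl
      rw [hmax]
      have g1 := (hg1 c1 hc1).mono (le_max_left (mdepth φ1) (mdepth ψ1))
      have g2 := (hg2 c2 hc2).mono (le_max_right (mdepth φ1) (mdepth ψ1))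
      refine ⟨.and g1.1 g2.1, ?_⟩
      intro q hq
      simp only [Cube.inter, List.mem_append] at hq
      rcases hq with (h | h) | (h | h)
      · exact g1.2 q (by simp [h])
      · exact g2.2 q (by simp [h])
      · exact g1.2 q (by simp [h])
      · exact g2.2 q (by simp [h])
    · intro c hc
      have hmax : mdepth (Form.and φ1 ψ1) = max (mdepth φ1) (mdepth ψ1) := rfl
      rw [hmax]
      rcases List.mem_append.mp hc with h | h
      · exact (hg1' c h).mono (le_max_left _ _)
      · exact (hg2' c h).mono (le_max_right _ _)
    · intro M s
      rw [show msat M s (.and _ _) ↔ msat M s _ ∧ msat M s _ from Iff.rfl,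
        hpos1 M s, hpos2 M s]
      constructor
      · rintro ⟨⟨c1, hc1, hs1⟩, ⟨c2, hc2, hs2⟩⟩
        exact ⟨c1.inter c2, List.mem_flatMap.mpr ⟨c1, hc1, List.mem_map.mpr ⟨c2, hc2, rfl⟩⟩,
          (cubeSat_inter M s c1 c2).mpr ⟨hs1, hs2⟩⟩
      · rintro ⟨c, hc, hs⟩
        simp only [List.mem_flatMap, List.mem_map] at hc
        obtain ⟨c1, hc1, c2, hc2, rfl⟩ := hc
        obtain ⟨hs1, hs2⟩ := (cubeSat_inter M s c1 c2).mp hs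
        exact ⟨⟨c1, hc1, hs1⟩, ⟨c2, hc2, hs2⟩⟩
    · intro M s
      rw [show (¬ msat M s (.and _ _)) ↔ ¬ (msat M s _ ∧ msat M s _) from Iff.rfl]
      rw [not_and_or, hneg1 M s, hneg2 M s]
      constructor
      · rintro (⟨c, hc, hs⟩ | ⟨c, hc, hs⟩)
        · exact ⟨c, List.mem_append.mpr (Or.inl hc), hs⟩
        · exact ⟨c, List.mem_append.mpr (Or.inr hc), hs⟩
      · rintro ⟨c, hc, hs⟩
        rcases List.mem_append.mp hc with h | h
        · exact Or.inl ⟨c, h, hs⟩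
        · exact Or.inr ⟨c, h, hs⟩
  | @box a φ hm ih =>
    refine ⟨[⟨Form.top, [], [(a, φ)]⟩], [⟨Form.top, [(a, .neg φ)], []⟩], ?_, ?_, ?_, ?_⟩
    · rintro c hc; simp at hc; subst hc
      refine ⟨prp_top, ?_⟩
      rintro q hq
      simp at hq
      subst hq
      exact ⟨hm, by simp [mdepth]⟩
    · rintro c hc; simp at hc; subst hc
      refine ⟨prp_top, ?_⟩
      rintro q hq
      simp at hq
      subst hq
      exact ⟨.neg hm, by simp [mdepth]⟩
    · intro M s
      constructor
      · intro H
        refine ⟨⟨Form.top, [], [(a, φ)]⟩, by simp, msat_top M s, ?_, ?_⟩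
        · rintro q hq; simp at hq
        · rintro q hq t hR; simp at hq; subst hq; exact H t hR
      · rintro ⟨c, hc, hs⟩
        simp at hc; subst hc
        exact fun t hR => hs.2.2 (a, φ) (by simp) t hR
    · intro M s
      constructor
      · intro H
        have H2 : ¬ ∀ t, M.R a s t → msat M t φ := H
        push_neg at H2
        obtain ⟨t, hR, ht⟩ := H2
        refine ⟨⟨Form.top, [(a, .neg φ)], []⟩, by simp, msat_top M s, ?_, ?_⟩
        · rintro q hq; simp at hq; subst hq; exact ⟨t, hR, ht⟩
        · rintro q hq; simp at hq
      · rintro ⟨c, hc, hs⟩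
        simp at hc; subst hc
        intro hbox
        obtain ⟨t, hR, ht⟩ := hs.2.1 (a, .neg φ) (by simp)
        exact ht (hbox t hR)

section Main
variable [Inhabited P]

noncomputable def boxConj (c : Cube P A) (a : A) : Form P A :=
  Form.conj ((c.box.filter (fun q => q.1 = a)).map (fun q => q.2))

lemma msat_boxConj (M : KModel P A) (s : M.World) (c : Cube P A) (a : A) :
    msat M s (boxConj c a) ↔ ∀ q ∈ c.box, q.1 = a → msat M s q.2 := by
  simp only [boxConj, msat_conj, List.mem_map, List.mem_filter, decide_eq_true_eq]
  constructor
  · intro H q hq ha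
    exact H q.2 ⟨q, ⟨hq, ha⟩, rfl⟩
  · rintro H ψ ⟨q, ⟨hq, ha⟩, rfl⟩
    exact H q hq ha

lemma modal_boxConj {c : Cube P A} (h : ∀ q ∈ c.box, (q.2 : Form P A).Modal) (a : A) :
    (boxConj c a).Modal := by
  refine modal_conj ?_
  rintro ψ hψ
  simp only [List.mem_map, List.mem_filter, decide_eq_true_eq] at hψ
  obtain ⟨q, ⟨hq, -⟩, rfl⟩ := hψ
  exact h q hq

lemma mdepth_boxConj {c : Cube P A} {n : ℕ} (h : ∀ q ∈ c.box, mdepth (q.2 : Form P A) ≤ n)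
    (a : A) : mdepth (boxConj c a) ≤ n := by
  refine mdepth_conj ?_
  rintro ψ hψ
  simp only [List.mem_map, List.mem_filter, decide_eq_true_eq] at hψ
  obtain ⟨q, ⟨hq, -⟩, rfl⟩ := hψ
  exact h q hq

lemma marrowOK_mono {U U' : List (Arrow P A)} (hsub : ∀ ar ∈ U, ar ∈ U')
    (M : KModel P A) {a : A} {o o' : ℕ} {s s' : M.World}
    (h : marrowOK M U a o o' s s') : marrowOK M U' a o o' s s' := by
  obtain ⟨ψ, ψ', hmem, hψ, hψ'⟩ := h
  exact ⟨ψ, ψ', hsub _ hmem, hψ, hψ'⟩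

lemma main_axiom (c : Cube P A) (hprp : c.prp.Prp)
    (hmod : ∀ q ∈ c.dia ++ c.box, (q.2 : Form P A).Modal)
    (M : KModel P A) (s : M.World) :
    (∃ U o, ModalArrows U ∧ CubeSat (pm M U) (s, o) c) ↔
      (msat M s c.prp ∧ ∀ q ∈ c.dia, ∃ t, M.R q.1 s t ∧
        ExSat M t (Form.and q.2 (boxConj c q.1))) := by
  have hmodD : ∀ q ∈ c.dia, (q.2 : Form P A).Modal :=
    fun q hq => hmod q (List.mem_append.mpr (Or.inl hq))
  have hmodB : ∀ q ∈ c.box, (q.2 : Form P A).Modal :=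
    fun q hq => hmod q (List.mem_append.mpr (Or.inr hq))
  constructor
  · rintro ⟨U, o, hU, hπ, hdia, hbox⟩
    refine ⟨(prp_pm hprp M U s o).mp hπ, ?_⟩
    intro q hq
    obtain ⟨⟨t, o'⟩, hR, ht⟩ := hdia q hq
    refine ⟨t, hR.1, U, o', hU, ht, ?_⟩
    refine (msat_boxConj _ _ _ _).mpr ?_
    intro q' hq' ha
    exact hbox q' hq' (t, o') (ha ▸ hR)
  · rintro ⟨hπ, hdia⟩
    set D := c.dia with hD
    set k := D.length with hk
    have hch : ∀ i : Fin k, ∃ (t : M.World) (U : List (Arrow P A)) (o : ℕ),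
        M.R (D.get i).1 s t ∧ ModalArrows U ∧
        msat (pm M U) (t, o) (Form.and (D.get i).2 (boxConj c (D.get i).1)) := by
      intro i
      obtain ⟨t, hR, U, o, hU, hm⟩ := hdia (D.get i) (D.get_mem i)
      exact ⟨t, U, o, hR, hU, hm⟩
    choose t U o hR hU hsat using hch
    -- outcome renaming functions
    set f : Fin k → ℕ → ℕ := fun i x => x * (k + 1) + i + 1 with hf
    have f_pos : ∀ i x, f i x ≠ 0 := by intro i x; simp [hf]
    have f_inj : ∀ i, Function.Injective (f i) := by
      intro i x y hxy
      simp only [hf] at hxy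
      have : x * (k+1) = y * (k+1) := by omega
      exact Nat.eq_of_mul_eq_mul_right (Nat.succ_pos k) this
    have f_eq : ∀ i j x y, f i x = f j y → i = j ∧ x = y := by
      intro i j x y hxy
      simp only [hf] at hxy
      have hmodi : (x * (k+1) + (i : ℕ) + 1) % (k+1) = (i : ℕ) + 1 := by
        rw [Nat.add_assoc, Nat.mul_comm, Nat.mul_add_mod]
        exact Nat.mod_eq_of_lt (by omega)
      have hmodj : (y * (k+1) + (j : ℕ) + 1) % (k+1) = (j : ℕ) + 1 := by
        rw [Nat.add_assoc, Nat.mul_comm, Nat.mul_add_mod]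
        exact Nat.mod_eq_of_lt (by omega)
      have hij : (i : ℕ) = (j : ℕ) := by rw [hxy] at hmodi; omega
      refine ⟨Fin.ext hij, ?_⟩
      rw [hij] at hxy
      have : x * (k+1) = y * (k+1) := by omega
      exact Nat.eq_of_mul_eq_mul_right (Nat.succ_pos k) this
    set U' : Fin k → List (Arrow P A) := fun i => (U i).map (shiftAr (f i)) with hU'
    set ψ : Fin k → Form P A :=
      fun i => Form.and (D.get i).2 (boxConj c (D.get i).1) with hψ
    have hψmod : ∀ i, (ψ i).Modal := fun i =>
      .and (hmodD _ (D.get_mem i)) (modal_boxConj hmodB _)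
    have hU'mod : ∀ i, ModalArrows (U' i) := fun i => modalArrows_shift (hU i) (f i)
    set rootAr : Fin k → Arrow P A :=
      fun i => ((D.get i).1, 0, (Form.top : Form P A), f i (o i),
        red (U' i) (ψ i) (f i (o i))) with hroot
    set Uc : List (Arrow P A) :=
      ((List.finRange k).map rootAr) ++ (List.finRange k).flatMap (fun i => U' i) with hUc
    -- membership facts
    have hsub : ∀ i, ∀ ar ∈ U' i, ar ∈ Uc := by
      intro i ar har
      rw [hUc, List.mem_append, List.mem_flatMap]
      exact Or.inr ⟨i, List.mem_finRange i, har⟩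
    have hsrcU' : ∀ i, ∀ ar ∈ U' i, (∃ x, ar.2.1 = f i x) ∧ (∃ x, ar.2.2.2.1 = f i x) := by
      intro i ar har
      rw [hU', List.mem_map] at har
      obtain ⟨ar0, -, rfl⟩ := har
      exact ⟨⟨ar0.2.1, rfl⟩, ⟨ar0.2.2.2.1, rfl⟩⟩
    have hmemUc : ∀ ar ∈ Uc, (∃ i, ar = rootAr i) ∨ ∃ i, ar ∈ U' i := by
      intro ar har
      rw [hUc, List.mem_append, List.mem_map, List.mem_flatMap] at har
      rcases har with ⟨i, -, rfl⟩ | ⟨i, -, h⟩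
      · exact Or.inl ⟨i, rfl⟩
      · exact Or.inr ⟨i, h⟩
    have hUcMod : ModalArrows Uc := by
      intro ar har
      rcases hmemUc ar har with ⟨i, rfl⟩ | ⟨i, h⟩
      · exact ⟨modal_top, red_modal (hU'mod i) (hψmod i) _⟩
      · exact hU'mod i ar h
    -- agreement between pm M (U' i) and pm M Uc on outcomes in range (f i)
    have hagree : ∀ (i : Fin k) {χ : Form P A}, χ.Modal → ∀ (x : ℕ) (u : M.World),
        msat (pm M (U' i)) (u, f i x) χ ↔ msat (pm M Uc) (u, f i x) χ := by
      intro i χ hχ x u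
      refine agree M (Set.range (f i)) ?_ ?_ hχ (f i x) ⟨x, rfl⟩ u
      · rintro a o1 o2 w w' ⟨x0, rfl⟩
        constructor
        · exact marrowOK_mono (hsub i) M
        · rintro ⟨σ, τ, hmem, hσ, hτ⟩
          rcases hmemUc _ hmem with ⟨j, heq⟩ | ⟨j, hj⟩
          · exfalso
            rw [hroot] at heq
            simp only [Prod.mk.injEq] at heq
            exact f_pos i x0 heq.2.1
          · have := (hsrcU' j _ hj).1
            simp only at this
            obtain ⟨x1, hx1⟩ := this
            obtain ⟨rfl, rfl⟩ := f_eq i j x0 x1 hx1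
            exact ⟨σ, τ, hj, hσ, hτ⟩
      · rintro a o1 o2 w w' ⟨x0, rfl⟩ ⟨σ, τ, hmem, -, -⟩
        obtain ⟨x, hx⟩ := (hsrcU' i _ hmem).2
        exact ⟨x, hx.symm⟩
    -- key: witnesses satisfy the red formulas
    have hkey : ∀ i, msat M (t i) (red (U' i) (ψ i) (f i (o i))) := by
      intro i
      rw [red_ok (hU'mod i) (hψmod i) M]
      rw [shift_sat (f_inj i) M (U i) (hψmod i)]
      exact hsat i
    refine ⟨Uc, 0, hUcMod, (prp_pm hprp M Uc s 0).mpr hπ, ?_, ?_⟩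
    · -- diamonds
      intro q hq
      rw [← hD] at hq
      obtain ⟨i, hi⟩ := List.mem_iff_get.mp hq
      subst hi
      refine ⟨(t i, f i (o i)), ⟨hR i, ?_⟩, ?_⟩
      · refine ⟨Form.top, red (U' i) (ψ i) (f i (o i)), ?_, msat_top M s, hkey i⟩
        have : rootAr i ∈ Uc := by
          rw [hUc, List.mem_append, List.mem_map]
          exact Or.inl ⟨i, List.mem_finRange i, rfl⟩
        exact this
      · have h1 : msat (pm M (U' i)) (t i, f i (o i)) (ψ i) := by
          rw [shift_sat (f_inj i) M (U i) (hψmod i)]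
          exact hsat i
        have h2 : msat (pm M (U' i)) (t i, f i (o i)) (D.get i).2 := h1.1
        exact (hagree i (hmodD _ (D.get_mem i)) (o i) (t i)).mp h2
    · -- boxes
      intro q hq
      rintro ⟨u, y⟩ ⟨hRu, σ, τ, hmem, hσ, hτ⟩
      rcases hmemUc _ hmem with ⟨i, heq⟩ | ⟨i, hi⟩
      · rw [hroot] at heq
        simp only [Prod.mk.injEq] at heq
        obtain ⟨ha, -, rfl, hy, rfl⟩ := heq
        have h1 : msat (pm M (U' i)) (u, f i (o i)) (ψ i) := by
          rw [← red_ok (hU'mod i) (hψmod i) M]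
          exact hτ
        have h2 : msat (pm M (U' i)) (u, f i (o i)) (boxConj c (D.get i).1) := h1.2
        replace h2 := (msat_boxConj _ _ _ _).mp h2
        have h3 := h2 q hq (by rw [ha])
        subst hy
        exact (hagree i (hmodB q hq) (o i) u).mp h3
      · exfalso
        have := (hsrcU' i _ hi).1
        simp only at this
        obtain ⟨x1, hx1⟩ := this
        exact f_pos i x1 hx1.symm

end Main

lemma trans_ex [Inhabited P] :
    ∀ (n : ℕ) {φ : Form P A}, φ.Modal → mdepth φ ≤ n →
      ∃ φ' : Form P A, φ'.Modal ∧
        ∀ (M : KModel P A) (s : M.World), ExSat M s φ ↔ msat M s φ' := by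
  intro n
  induction n using Nat.strong_induction_on with
  | _ n ih =>
    intro φ hφ hd
    obtain ⟨L, L', hg, -, hL, -⟩ := dnf hφ
    have hcube : ∀ c ∈ L, ∃ φc : Form P A, φc.Modal ∧
        ∀ (M : KModel P A) (s : M.World),
          (∃ U o, ModalArrows U ∧ CubeSat (pm M U) (s, o) c) ↔ msat M s φc := by
      intro c hc
      obtain ⟨hcp, hce⟩ := hg c hc
      have hboxm : ∀ q' ∈ c.box, (q'.2 : Form P A).Modal :=
        fun q' h' => (hce q' (List.mem_append.mpr (Or.inr h'))).1
      have hq : ∀ q : {q // q ∈ c.dia}, ∃ χ : Form P A, χ.Modal ∧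
          ∀ (M : KModel P A) (t : M.World),
            ExSat M t (Form.and q.1.2 (boxConj c q.1.1)) ↔ msat M t χ := by
        rintro ⟨q, hqd⟩
        have hqm := hce q (List.mem_append.mpr (Or.inl hqd))
        have hψm : (Form.and q.2 (boxConj c q.1)).Modal :=
          .and hqm.1 (modal_boxConj hboxm _)
        have hd1 : mdepth (Form.and q.2 (boxConj c q.1)) ≤ mdepth φ - 1 := by
          have h1 : mdepth q.2 ≤ mdepth φ - 1 := by
            have := hqm.2; omega
          have h2 : mdepth (boxConj c q.1) ≤ mdepth φ - 1 := by
            refine mdepth_boxConj ?_ _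
            intro q' h'
            have := (hce q' (List.mem_append.mpr (Or.inr h'))).2
            omega
          have : mdepth (Form.and q.2 (boxConj c q.1)) =
              max (mdepth q.2) (mdepth (boxConj c q.1)) := rfl
          omega
        have hlt : mdepth φ - 1 < n := by
          have := hqm.2; omega
        exact ih (mdepth φ - 1) hlt hψm hd1
      choose g hgM hgE using hq
      refine ⟨Form.and c.prp
        (Form.conj (c.dia.attach.map (fun q => Form.dia q.1.1 (g q)))), ?_, ?_⟩
      · refine .and (prp_modal hcp) (modal_conj ?_)
        rintro χ hχ
        simp only [List.mem_map] at hχ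
        obtain ⟨q, -, rfl⟩ := hχ
        exact modal_dia _ (hgM q)
      · intro M s
        rw [main_axiom c hcp (fun q' h' => (hce q' h').1) M s]
        constructor
        · rintro ⟨h1, h2⟩
          refine ⟨h1, ?_⟩
          rw [msat_conj]
          rintro χ hχ
          simp only [List.mem_map] at hχ
          obtain ⟨q, -, rfl⟩ := hχ
          rw [msat_dia]
          obtain ⟨u, hRu, hE⟩ := h2 q.1 q.2
          exact ⟨u, hRu, (hgE q M u).mp hE⟩
        · rintro ⟨h1, h2⟩
          refine ⟨h1, ?_⟩
          intro q hqm
          rw [msat_conj] at h2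
          have h3 := h2 (Form.dia q.1 (g ⟨q, hqm⟩))
            (List.mem_map.mpr ⟨⟨q, hqm⟩, List.mem_attach _ _, rfl⟩)
          rw [msat_dia] at h3
          obtain ⟨u, hRu, hu⟩ := h3
          exact ⟨u, hRu, (hgE ⟨q, hqm⟩ M u).mpr hu⟩
    have hcube' : ∀ c : {c // c ∈ L}, ∃ φc : Form P A, φc.Modal ∧
        ∀ (M : KModel P A) (s : M.World),
          (∃ U o, ModalArrows U ∧ CubeSat (pm M U) (s, o) c.1) ↔ msat M s φc :=
      fun c => hcube c.1 c.2
    choose g hgM hgE using hcube'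
    refine ⟨disjF (L.attach.map g), modal_disj ?_, ?_⟩
    · rintro ψ hψ
      simp only [List.mem_map] at hψ
      obtain ⟨cc, -, rfl⟩ := hψ
      exact hgM cc
    · intro M s
      rw [msat_disj]
      constructor
      · rintro ⟨U, o, hU, hm⟩
        rw [hL (pm M U) (s, o)] at hm
        obtain ⟨c, hc, hcs⟩ := hm
        refine ⟨g ⟨c, hc⟩, List.mem_map.mpr ⟨⟨c, hc⟩, List.mem_attach _ _, rfl⟩, ?_⟩
        exact (hgE ⟨c, hc⟩ M s).mp ⟨U, o, hU, hcs⟩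
      · rintro ⟨ψ, hψ, hm⟩
        simp only [List.mem_map] at hψ
        obtain ⟨cc, -, rfl⟩ := hψ
        obtain ⟨U, o, hU, hcs⟩ := (hgE cc M s).mpr hm
        exact ⟨U, o, hU, (hL (pm M U) (s, o)).mpr ⟨cc.1, cc.2, hcs⟩⟩

/-- for every basic modal formula `φ` there is a basic modal formula
`φ'` such that `⟨↑⟩φ ↔ φ'` is valid. -/
theorem ex_reduction (P A : Type) (φ : Form P A) (h : φ.Modal) :
    ∃ φ' : Form P A, φ'.Modal ∧
      ∀ (M : KModel P A) (s : M.World),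
        Form.sat M s (Form.ex φ) ↔ Form.sat M s φ' := by
  haveI : Inhabited P := Classical.inhabited_of_nonempty (modal_nonempty h)
  obtain ⟨φ', hm, hiff⟩ := trans_ex (mdepth φ) h le_rfl
  refine ⟨φ', hm, fun M s => ?_⟩
  rw [sat_ex h M s, hiff M s, modal_sat hm M s]

end AAUML
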